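/- Let (w_k)_{k≥0} and (ĝ_k)_{k≥0} be nonnegative reals with w_k ≤ ĝ_k for all k, and suppose w_k ≤ w_{k−1} − C₀γ_k ĝ_{k−1} + γ_k²C₁ + e_k with C₀ ∈ (0, 1], C₁ ≥ 0, e_k ≥ 0, γ_k ∈ (0, 1]. Then w_k ≤ (1 − C₀γ_k/2)w_{k−1} − (C₀γ_k/2)ĝ_{k−1} + γ_k²C₁ + e_k, and with Γ_N = ∏_{k=1}^N (1 − C₀γ_k/2), summing yields (C₀/2)Σ_{k=1}^N (γ_k/Γ_k)ĝ_{k−1} + w_N/Γ_N ≤ w_0 + C₁Σ_{k=1}^N γ_k²/Γ_k + Σ_{k=1}^N e_k/Γ_k. -/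

import Mathlib

/-- the telescoping argument for stochastic saddle-point Frank-Wolfe with
non-adaptive stepsizes, with `Γ k = ∏_{j=1}^k (1 − C₀ γ_j / 2)`. -/
theorem stmt10 (w g e γ : ℕ → ℝ) (C₀ C₁ : ℝ)
    (hC₀0 : 0 < C₀) (hC₀1 : C₀ ≤ 1) (hC₁ : 0 ≤ C₁)
    (hw : ∀ k, 0 ≤ w k) (hg : ∀ k, 0 ≤ g k) (he : ∀ k, 0 ≤ e k)
    (hγ0 : ∀ k, 0 < γ k) (hγ1 : ∀ k, γ k ≤ 1)
    (hwg : ∀ k, w k ≤ g k)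
    (hrec : ∀ k, 1 ≤ k →
      w k ≤ w (k - 1) - C₀ * γ k * g (k - 1) + (γ k) ^ 2 * C₁ + e k) :
    (∀ k, 1 ≤ k →
      w k ≤ (1 - C₀ * γ k / 2) * w (k - 1) - C₀ * γ k / 2 * g (k - 1)
        + (γ k) ^ 2 * C₁ + e k) ∧
    (∀ N : ℕ,
      C₀ / 2 * ∑ k ∈ Finset.Icc 1 N,
          γ k / (∏ j ∈ Finset.Icc 1 k, (1 - C₀ * γ j / 2)) * g (k - 1)
        + w N / (∏ j ∈ Finset.Icc 1 N, (1 - C₀ * γ j / 2))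
      ≤ w 0
        + C₁ * ∑ k ∈ Finset.Icc 1 N,
            (γ k) ^ 2 / (∏ j ∈ Finset.Icc 1 k, (1 - C₀ * γ j / 2))
        + ∑ k ∈ Finset.Icc 1 N,
            e k / (∏ j ∈ Finset.Icc 1 k, (1 - C₀ * γ j / 2))) := by
  have hfac : ∀ j, 0 < 1 - C₀ * γ j / 2 := by
    intro j
    have h1 : C₀ * γ j ≤ 1 := by
      have := mul_le_mul hC₀1 (hγ1 j) (hγ0 j).le zero_le_one
      linarith
    linarith
  have hΓ : ∀ N, 0 < ∏ j ∈ Finset.Icc 1 N, (1 - C₀ * γ j / 2) :=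
    fun N => Finset.prod_pos (fun j _ => hfac j)
  have part1 : ∀ k, 1 ≤ k →
      w k ≤ (1 - C₀ * γ k / 2) * w (k - 1) - C₀ * γ k / 2 * g (k - 1)
        + (γ k) ^ 2 * C₁ + e k := by
    intro k hk
    have h := hrec k hk
    have hgw := hwg (k - 1)
    have hpos : 0 ≤ C₀ * γ k / 2 := by
      have := mul_pos hC₀0 (hγ0 k); linarith
    nlinarith [mul_le_mul_of_nonneg_left hgw hpos]
  refine ⟨part1, ?_⟩
  intro N
  induction N with
  | zero => simp
  | succ n ih =>
    have hΓn := hΓ n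
    have hΓs := hfac (n + 1)
    have hprod : ∏ j ∈ Finset.Icc 1 (n + 1), (1 - C₀ * γ j / 2)
        = (∏ j ∈ Finset.Icc 1 n, (1 - C₀ * γ j / 2)) * (1 - C₀ * γ (n + 1) / 2) :=
      Finset.prod_Icc_succ_top (by omega) _
    rw [Finset.sum_Icc_succ_top (by omega : 1 ≤ n + 1),
        Finset.sum_Icc_succ_top (by omega : 1 ≤ n + 1),
        Finset.sum_Icc_succ_top (by omega : 1 ≤ n + 1), hprod]
    set Γn := ∏ j ∈ Finset.Icc 1 n, (1 - C₀ * γ j / 2) with hΓdef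
    set P := Γn * (1 - C₀ * γ (n + 1) / 2) with hP
    have hPpos : 0 < P := mul_pos hΓn hΓs
    have h1 := part1 (n + 1) (by omega)
    simp only [Nat.add_sub_cancel] at h1
    have hwn : w n / Γn = ((1 - C₀ * γ (n + 1) / 2) * w n) / P := by
      rw [hP, mul_comm (1 - C₀ * γ (n + 1) / 2) (w n),
        mul_div_mul_right _ _ hΓs.ne']
    have key : C₀ / 2 * (γ (n + 1) / P * g (n + 1 - 1)) + w (n + 1) / P
        ≤ w n / Γn + C₁ * ((γ (n + 1)) ^ 2 / P) + e (n + 1) / P := by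
      simp only [Nat.add_sub_cancel]
      rw [hwn]
      have hcomb : C₀ / 2 * (γ (n + 1) / P * g n) + w (n + 1) / P
          = (C₀ / 2 * γ (n + 1) * g n + w (n + 1)) / P := by ring
      have hcomb2 : (1 - C₀ * γ (n + 1) / 2) * w n / P + C₁ * ((γ (n + 1)) ^ 2 / P) + e (n + 1) / P
          = ((1 - C₀ * γ (n + 1) / 2) * w n + C₁ * (γ (n + 1)) ^ 2 + e (n + 1)) / P := by ring
      rw [hcomb, hcomb2]
      have hineq : C₀ / 2 * γ (n + 1) * g n + w (n + 1)
          ≤ (1 - C₀ * γ (n + 1) / 2) * w n + C₁ * (γ (n + 1)) ^ 2 + e (n + 1) := by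
        nlinarith [h1]
      exact div_le_div_of_nonneg_right hineq hPpos.le
    linarith [ih, key]
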